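/- arXiv:2210.15249 — 4 statements merged into one kernel-verified Lean document; each statement's English description precedes it below -/
import Mathlib

section
/- Let X be a non-trivial connected twin-free graph in which every edge lies on a triangle. If for all pairs of adjacent vertices x,y and all pairs of vertices z,w at distance 2, the number of common neighbours of x and y differs from the number of common neighbours of z and w, then X is stable. -/
open SimpleGraph

/-- The canonical double cover `BX = X × K₂` of a graph `X`:
vertex set `V × Bool`, with `(x,i)` adjacent to `(y,j)` iff `x ~ y` in `X` and `i ≠ j`. -/
def doubleCover {V : Type*} (X : SimpleGraph V) : SimpleGraph (V × Bool) where
  Adj p q := X.Adj p.1 q.1 ∧ p.2 ≠ q.2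
  symm := ⟨fun p q h => ⟨h.1.symm, Ne.symm h.2⟩⟩
  loopless := ⟨fun p h => h.2 rfl⟩

/-- An automorphism of `BX` is *expected* if it lies in the subgroup generated by the
lifts of automorphisms of `X` and the coordinate swap `τ`, i.e. it has the form
`(x,i) ↦ (φ x, i + b)` for some automorphism `φ` of `X` and some `b`. -/
def IsExpected {V : Type*} (X : SimpleGraph V) (α : doubleCover X ≃g doubleCover X) : Prop :=
  ∃ (φ : X ≃g X) (b : Bool), ∀ p : V × Bool, α p = (φ p.1, xor p.2 b)

/-- A graph is *stable* if every automorphism of its canonical double cover is expected. -/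
def IsStable {V : Type*} (X : SimpleGraph V) : Prop :=
  ∀ α : doubleCover X ≃g doubleCover X, IsExpected X α

/-- A graph is *twin-free* if distinct vertices have distinct neighbourhoods. -/
def TwinFree {V : Type*} (X : SimpleGraph V) : Prop :=
  ∀ u v : V, X.neighborSet u = X.neighborSet v → u = v

section Aux

variable {V : Type*}

private lemma bool_ne_not (i : Bool) : i ≠ !i := by cases i <;> decide

private lemma xor_right_cancel (b : Bool) : ∀ a c : Bool, xor a b = xor c b → a = c := by
  cases b <;> decide

private lemma exists_adj_of_conn [Nontrivial V] (X : SimpleGraph V) (hconn : X.Connected)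
    (x : V) : ∃ z, X.Adj x z := by
  obtain ⟨y, hy⟩ := exists_ne x
  obtain ⟨w⟩ := hconn.preconnected x y
  cases w with
  | nil => exact absurd rfl hy.symm
  | cons h _ => exact ⟨_, h⟩

private lemma bx_flip (X : SimpleGraph V)
    (htri : ∀ u v : V, X.Adj u v → ∃ w : V, X.Adj u w ∧ X.Adj v w)
    {x y : V} (hxy : X.Adj x y) (i : Bool) :
    (doubleCover X).Reachable (x, i) (x, !i) := by
  obtain ⟨w, hxw, hyw⟩ := htri x y hxy
  have e1 : (doubleCover X).Adj (x, i) (y, !i) := ⟨hxy, bool_ne_not i⟩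
  have e2 : (doubleCover X).Adj (y, !i) (w, i) := ⟨hyw, (bool_ne_not i).symm⟩
  have e3 : (doubleCover X).Adj (w, i) (x, !i) := ⟨hxw.symm, bool_ne_not i⟩
  exact e1.reachable.trans (e2.reachable.trans e3.reachable)

private lemma bx_preconnected [Nontrivial V] (X : SimpleGraph V) (hconn : X.Connected)
    (htri : ∀ u v : V, X.Adj u v → ∃ w : V, X.Adj u w ∧ X.Adj v w) :
    (doubleCover X).Preconnected := by
  have key : ∀ (x y : V), X.Walk x y → ∀ i j : Bool,
      (doubleCover X).Reachable (x, i) (y, j) := by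
    intro x y w
    induction w with
    | nil =>
      intro i j
      by_cases hij : i = j
      · subst hij; exact Reachable.refl _
      · obtain ⟨z, hz⟩ := exists_adj_of_conn X hconn _
        have : j = !i := by cases i <;> cases j <;> simp_all
        subst this
        exact bx_flip X htri hz i
    | cons hadj _ ih =>
      intro i j
      have e : (doubleCover X).Adj (_, i) (_, !i) := ⟨hadj, bool_ne_not i⟩
      exact e.reachable.trans (ih (!i) j)
  intro p q
  obtain ⟨w⟩ := hconn.preconnected p.1 q.1
  have := key p.1 q.1 w p.2 q.2
  simpa using this

/-- The level-displacement of an automorphism of the double cover is constant. -/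
private lemma level_const [Nontrivial V] (X : SimpleGraph V) (hconn : X.Connected)
    (htri : ∀ u v : V, X.Adj u v → ∃ w : V, X.Adj u w ∧ X.Adj v w)
    (α : doubleCover X ≃g doubleCover X) :
    ∃ b : Bool, ∀ p : V × Bool, (α p).2 = xor p.2 b := by
  have hstep : ∀ p q : V × Bool, (doubleCover X).Walk p q →
      xor (α p).2 p.2 = xor (α q).2 q.2 := by
    intro p q w
    induction w with
    | nil => rfl
    | cons hadj _ ih =>
      refine Eq.trans ?_ ih
      rename_i p p' _ _
      have h1 : (doubleCover X).Adj (α p) (α p') := α.map_rel_iff.mpr hadj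
      have h2 : (α p').2 = !(α p).2 := Bool.eq_not_iff.mpr (Ne.symm h1.2)
      have h3 : p'.2 = !p.2 := Bool.eq_not_iff.mpr (Ne.symm hadj.2)
      rw [h2, h3]
      cases (α p).2 <;> cases p.2 <;> rfl
  obtain ⟨v0⟩ := (inferInstance : Nontrivial V).to_nonempty
  refine ⟨xor (α (v0, false)).2 false, ?_⟩
  intro p
  obtain ⟨w⟩ := bx_preconnected X hconn htri (v0, false) p
  have hst := hstep _ _ w
  rw [hst]
  cases (α p).2 <;> cases p.2 <;> rfl

/-- Key step: any level-respecting automorphism of the double cover preserves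
adjacency on each level. -/
private lemma aux_forward [Fintype V] (X : SimpleGraph V) (hconn : X.Connected)
    (htri : ∀ u v : V, X.Adj u v → ∃ w : V, X.Adj u w ∧ X.Adj v w)
    (hcod : ∀ x y z w : V, X.Adj x y → X.dist z w = 2 →
      (X.neighborSet x ∩ X.neighborSet y).ncard ≠
        (X.neighborSet z ∩ X.neighborSet w).ncard)
    (β : doubleCover X ≃g doubleCover X) (b : Bool)
    (hb : ∀ p : V × Bool, (β p).2 = xor p.2 b)
    (i : Bool) {x y : V} (hxy : X.Adj x y) :
    X.Adj (β (x, i)).1 (β (y, i)).1 := by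
  set g : V → V := fun v => (β (v, i)).1 with hg
  set h' : V → V := fun v => (β (v, !i)).1 with hh
  have hβ1 : ∀ v : V, β (v, i) = (g v, xor i b) := fun v => Prod.ext rfl (hb (v, i))
  have hβ2 : ∀ v : V, β (v, !i) = (h' v, xor (!i) b) := fun v => Prod.ext rfl (hb (v, !i))
  have hxorne : xor i b ≠ xor (!i) b := by cases i <;> cases b <;> decide
  have cross : ∀ u v : V, X.Adj (g u) (h' v) ↔ X.Adj u v := by
    intro u v
    have h1 : (doubleCover X).Adj (β (u, i)) (β (v, !i)) ↔ (doubleCover X).Adj (u, i) (v, !i) :=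
      β.map_rel_iff
    rw [hβ1, hβ2] at h1
    constructor
    · intro hadj
      exact ((h1.mp ⟨hadj, hxorne⟩)).1
    · intro hadj
      exact (h1.mpr ⟨hadj, bool_ne_not i⟩).1
  have ginj : Function.Injective g := by
    intro u v huv
    have : β (u, i) = β (v, i) := by rw [hβ1, hβ1, huv]
    have := β.injective this
    exact (Prod.ext_iff.mp this).1
  have hinj : Function.Injective h' := by
    intro u v huv
    have : β (u, !i) = β (v, !i) := by rw [hβ2, hβ2, huv]
    have := β.injective this
    exact (Prod.ext_iff.mp this).1
  have hsurj : Function.Surjective h' := by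
    intro v
    set p := β.symm (v, xor (!i) b) with hp
    have hβp : β p = (v, xor (!i) b) := β.apply_symm_apply _
    have h2 := hb p
    rw [hβp] at h2
    have hp2 : p.2 = !i := (xor_right_cancel b _ _ h2).symm
    refine ⟨p.1, ?_⟩
    have hpe : (p.1, !i) = p := by rw [← hp2]
    show (β (p.1, !i)).1 = v
    rw [hpe, hβp]
  -- main argument
  by_contra hnadj
  obtain ⟨w, hxw, hyw⟩ := htri x y hxy
  have hc1 : X.Adj (g x) (h' w) := (cross x w).mpr hxw
  have hc2 : X.Adj (g y) (h' w) := (cross y w).mpr hyw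
  have hne : g x ≠ g y := fun e => X.irrefl (ginj e ▸ hxy)
  -- distance 2
  have hdist : X.dist (g x) (g y) = 2 := by
    have hle : X.dist (g x) (g y) ≤ 2 := by
      have := SimpleGraph.dist_le (Walk.cons hc1 (Walk.cons hc2.symm Walk.nil))
      simpa using this
    have h0 : 0 < X.dist (g x) (g y) := hconn.pos_dist_of_ne hne
    have h1 : X.dist (g x) (g y) ≠ 1 := fun e => hnadj (dist_eq_one_iff_adj.mp e)
    omega
  -- neighbourhood intersection image
  have himg : X.neighborSet (g x) ∩ X.neighborSet (g y)
      = h' '' (X.neighborSet x ∩ X.neighborSet y) := by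
    ext v
    constructor
    · rintro ⟨hv1, hv2⟩
      obtain ⟨u, rfl⟩ := hsurj v
      exact ⟨u, ⟨(cross x u).mp hv1, (cross y u).mp hv2⟩, rfl⟩
    · rintro ⟨u, ⟨hu1, hu2⟩, rfl⟩
      exact ⟨(cross x u).mpr hu1, (cross y u).mpr hu2⟩
  have hcard : (X.neighborSet (g x) ∩ X.neighborSet (g y)).ncard
      = (X.neighborSet x ∩ X.neighborSet y).ncard := by
    rw [himg, Set.ncard_image_of_injective _ hinj]
  exact hcod x y (g x) (g y) hxy hdist hcard.symm

end Aux

theorem stable_of_triangle_edge_nonedge {V : Type*} [Fintype V] [Nontrivial V]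
    (X : SimpleGraph V) (hconn : X.Connected) (htf : TwinFree X)
    (htri : ∀ u v : V, X.Adj u v → ∃ w : V, X.Adj u w ∧ X.Adj v w)
    (h : ∀ x y z w : V, X.Adj x y → X.dist z w = 2 →
      (X.neighborSet x ∩ X.neighborSet y).ncard ≠
        (X.neighborSet z ∩ X.neighborSet w).ncard) :
    IsStable X := by
  intro α
  obtain ⟨b, hb⟩ := level_const X hconn htri α
  have hb' : ∀ q : V × Bool, (α.symm q).2 = xor q.2 b := by
    intro q
    have h1 := hb (α.symm q)
    rw [α.apply_symm_apply] at h1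
    rw [h1]
    cases (α.symm q).2 <;> cases b <;> rfl
  set g : V → V := fun v => (α (v, false)).1 with hgdef
  set h' : V → V := fun v => (α (v, true)).1 with hhdef
  have hα0 : ∀ v : V, α (v, false) = (g v, b) := by
    intro v
    refine Prod.ext rfl ?_
    have := hb (v, false)
    simpa using this
  have hα1 : ∀ v : V, α (v, true) = (h' v, !b) := by
    intro v
    refine Prod.ext rfl ?_
    have := hb (v, true)
    cases b <;> simp_all
  -- forward adjacency preservation
  have hgfwd : ∀ {u v : V}, X.Adj u v → X.Adj (g u) (g v) := by
    intro u v huv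
    exact aux_forward X hconn htri h α b hb false huv
  -- backward adjacency preservation via α.symm
  have hgbwd : ∀ {u v : V}, X.Adj (g u) (g v) → X.Adj u v := by
    intro u v huv
    have := aux_forward X hconn htri h α.symm b hb' b huv
    rw [show ((g u : V), b) = α (u, false) from (hα0 u).symm,
        show ((g v : V), b) = α (v, false) from (hα0 v).symm,
        α.symm_apply_apply, α.symm_apply_apply] at this
    exact this
  have ginj : Function.Injective g := by
    intro u v huv
    have : α (u, false) = α (v, false) := by rw [hα0, hα0, huv]
    exact (Prod.ext_iff.mp (α.injective this)).1
  have gsurj : Function.Surjective g := by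
    intro v
    set p := α.symm (v, b) with hp
    have hβp : α p = (v, b) := α.apply_symm_apply _
    have h2 := hb' (v, b)
    rw [← hp] at h2
    have hp2 : p.2 = false := by
      rw [h2]; cases b <;> rfl
    refine ⟨p.1, ?_⟩
    have hpe : ((p.1 : V), false) = p := by rw [← hp2]
    show (α (p.1, false)).1 = v
    rw [hpe, hβp]
  -- cross adjacency: X.Adj (g u) (h' v) ↔ X.Adj u v
  have cross : ∀ u v : V, X.Adj (g u) (h' v) ↔ X.Adj u v := by
    intro u v
    have h1 : (doubleCover X).Adj (α (u, false)) (α (v, true)) ↔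
        (doubleCover X).Adj (u, false) (v, true) := α.map_rel_iff
    rw [hα0, hα1] at h1
    constructor
    · intro hadj
      have := h1.mp ⟨hadj, bool_ne_not b⟩
      exact this.1
    · intro hadj
      exact (h1.mpr ⟨hadj, Bool.false_ne_true⟩).1
  -- h' = g by twin-freeness
  have hhg : ∀ v : V, h' v = g v := by
    intro v
    apply htf
    ext u
    simp only [mem_neighborSet]
    obtain ⟨u', rfl⟩ := gsurj u
    constructor
    · intro hadj
      have : X.Adj (g u') (h' v) := hadj.symm
      have := (cross u' v).mp this
      exact hgfwd this.symm
    · intro hadj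
      have : X.Adj u' v := hgbwd hadj.symm
      exact ((cross u' v).mpr this).symm
  -- assemble the automorphism
  refine ⟨⟨Equiv.ofBijective g ⟨ginj, gsurj⟩, fun {u v} => ⟨hgbwd, hgfwd⟩⟩, b, ?_⟩
  rintro ⟨x, i⟩
  cases i
  · rw [hα0 x]; cases b <;> rfl
  · have := hα1 x
    rw [hhg x] at this
    rw [this]; cases b <;> rfl
end

section
/- For n ≥ 6 with n ≠ 6 and 1 ≤ k ≤ n−1 with (n,k) ∉ {(2,1),(4,2)}, the Johnson graph J(n,k) is stable. -/
open SimpleGraph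

/-- The Johnson graph `J(n,k)`: vertices are the `k`-element subsets of `{1,…,n}`,
two subsets being adjacent iff their intersection has `k-1` elements. -/
def johnsonGraph (n k : ℕ) : SimpleGraph {s : Finset (Fin n) // s.card = k} where
  Adj s t := s ≠ t ∧ (s.1 ∩ t.1).card = k - 1
  symm := ⟨fun s t h => ⟨h.1.symm, by rw [Finset.inter_comm]; exact h.2⟩⟩
  loopless := ⟨fun s h => h.1 rfl⟩

namespace JS
open Finset

variable {n k : ℕ}

abbrev JV (n k : ℕ) := {s : Finset (Fin n) // s.card = k}

instance jdec (n k : ℕ) : DecidableRel (johnsonGraph n k).Adj :=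
  fun _ _ => inferInstanceAs (Decidable (_ ∧ _))

instance ddec {W : Type*} (X : SimpleGraph W) [DecidableRel X.Adj] :
    DecidableRel (doubleCover X).Adj :=
  fun _ _ => inferInstanceAs (Decidable (_ ∧ _))

def common {W : Type*} [Fintype W] [DecidableEq W] (X : SimpleGraph W) [DecidableRel X.Adj]
    (u v : W) : Finset W :=
  univ.filter (fun w => X.Adj u w ∧ X.Adj v w)

lemma mem_common {W : Type*} [Fintype W] [DecidableEq W] (X : SimpleGraph W)
    [DecidableRel X.Adj] {u v w : W} : w ∈ common X u v ↔ X.Adj u w ∧ X.Adj v w := by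
  simp [common]

lemma jadj {u v : JV n k} :
    (johnsonGraph n k).Adj u v ↔ u ≠ v ∧ (u.1 ∩ v.1).card = k - 1 := Iff.rfl

/-- Core 1: adjacent vertices of `J(n,k)` have at least 5 common neighbours (n ≥ 7). -/
lemma common_of_adj (hn : 7 ≤ n) {u v : JV n k} (h : (johnsonGraph n k).Adj u v) :
    5 ≤ (common (johnsonGraph n k) u v).card := by
  obtain ⟨hne, hint⟩ := h
  have hne' : u.1 ≠ v.1 := fun hc => hne (Subtype.ext hc)
  have hu := u.2
  have hv := v.2
  have hk : 1 ≤ k := by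
    by_contra hc
    have hk0 : k = 0 := by omega
    exact hne' ((Finset.card_eq_zero.mp (hk0 ▸ hu)).trans
      (Finset.card_eq_zero.mp (hk0 ▸ hv)).symm)
  have hdU : (u.1 \ v.1).card = 1 := by
    have := Finset.card_inter_add_card_sdiff u.1 v.1
    omega
  have hdV : (v.1 \ u.1).card = 1 := by
    have h1 := Finset.card_inter_add_card_sdiff v.1 u.1
    rw [Finset.inter_comm] at h1
    omega
  have hun : (u.1 ∪ v.1).card = k + 1 := by
    have := Finset.card_union_add_card_inter u.1 v.1
    omega
  obtain ⟨a, ha⟩ := Finset.card_eq_one.mp hdU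
  obtain ⟨b, hbb⟩ := Finset.card_eq_one.mp hdV
  have haU : a ∈ u.1 := (Finset.mem_sdiff.mp (ha ▸ Finset.mem_singleton_self a)).1
  have haV : a ∉ v.1 := (Finset.mem_sdiff.mp (ha ▸ Finset.mem_singleton_self a)).2
  have hbV : b ∈ v.1 := (Finset.mem_sdiff.mp (hbb ▸ Finset.mem_singleton_self b)).1
  have hbU : b ∉ u.1 := (Finset.mem_sdiff.mp (hbb ▸ Finset.mem_singleton_self b)).2
  set A := u.1 ∩ v.1 with hA
  have hAsubU : A ⊆ u.1 := Finset.inter_subset_left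
  have hAsubV : A ⊆ v.1 := Finset.inter_subset_right
  have haA : a ∉ A := fun hc => haV (hAsubV hc)
  set S1 : Finset (Finset (Fin n)) := ((u.1 ∪ v.1)ᶜ).image (fun c => insert c A) with hS1
  set S2 : Finset (Finset (Fin n)) := A.image (fun x => (u.1 ∪ v.1).erase x) with hS2
  have hmem1 : ∀ w ∈ S1, ∃ hw : w.card = k,
      (johnsonGraph n k).Adj u ⟨w, hw⟩ ∧ (johnsonGraph n k).Adj v ⟨w, hw⟩ ∧ a ∉ w := by
    intro w hw
    rw [hS1, Finset.mem_image] at hw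
    obtain ⟨c, hc, rfl⟩ := hw
    rw [Finset.mem_compl, Finset.mem_union] at hc
    push_neg at hc
    have hcA : c ∉ A := fun h' => hc.1 (hAsubU h')
    have hcard : (insert c A).card = k := by
      rw [Finset.card_insert_of_notMem hcA, hA, hint]
      omega
    have hUint : u.1 ∩ insert c A = A := by
      rw [Finset.inter_insert_of_notMem hc.1, Finset.inter_eq_right.mpr hAsubU]
    have hVint : v.1 ∩ insert c A = A := by
      rw [Finset.inter_insert_of_notMem hc.2, Finset.inter_eq_right.mpr hAsubV]
    have hna : a ∉ insert c A := by
      rw [Finset.mem_insert]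
      rintro (rfl | h')
      · exact hc.1 haU
      · exact haA h'
    have hnb : b ∉ insert c A := by
      rw [Finset.mem_insert]
      rintro (rfl | h')
      · exact hc.2 hbV
      · exact hbU (hAsubU h')
    refine ⟨hcard, ⟨?_, ?_⟩, ⟨?_, ?_⟩, hna⟩
    · intro hc'
      exact hna (by rw [hc'] at haU; exact haU)
    · rw [hUint]; exact hint
    · intro hc'
      exact hnb (by rw [hc'] at hbV; exact hbV)
    · rw [hVint]; exact hint
  have hmem2 : ∀ w ∈ S2, ∃ hw : w.card = k,
      (johnsonGraph n k).Adj u ⟨w, hw⟩ ∧ (johnsonGraph n k).Adj v ⟨w, hw⟩ ∧ a ∈ w := by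
    intro w hw
    rw [hS2, Finset.mem_image] at hw
    obtain ⟨x, hx, rfl⟩ := hw
    have hxU : x ∈ u.1 := hAsubU hx
    have hxV : x ∈ v.1 := hAsubV hx
    have hxUV : x ∈ u.1 ∪ v.1 := Finset.mem_union_left _ hxU
    have hcard : ((u.1 ∪ v.1).erase x).card = k := by
      rw [Finset.card_erase_of_mem hxUV, hun]
      omega
    have hUint : u.1 ∩ (u.1 ∪ v.1).erase x = u.1.erase x := by
      ext y
      simp only [Finset.mem_inter, Finset.mem_erase, Finset.mem_union]
      tauto
    have hVint : v.1 ∩ (u.1 ∪ v.1).erase x = v.1.erase x := by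
      ext y
      simp only [Finset.mem_inter, Finset.mem_erase, Finset.mem_union]
      tauto
    have hbw : b ∈ (u.1 ∪ v.1).erase x :=
      Finset.mem_erase.mpr ⟨by rintro rfl; exact hbU hxU, Finset.mem_union_right _ hbV⟩
    have haw : a ∈ (u.1 ∪ v.1).erase x :=
      Finset.mem_erase.mpr ⟨by rintro rfl; exact haA hx, Finset.mem_union_left _ haU⟩
    refine ⟨hcard, ⟨?_, ?_⟩, ⟨?_, ?_⟩, haw⟩
    · intro hc'
      exact hbU (by rw [congrArg Subtype.val hc']; exact hbw)
    · rw [hUint, Finset.card_erase_of_mem hxU, hu]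
    · intro hc'
      exact haV (by rw [congrArg Subtype.val hc']; exact haw)
    · rw [hVint, Finset.card_erase_of_mem hxV, hv]
  have hdisj : Disjoint S1 S2 := by
    rw [Finset.disjoint_left]
    intro w hw1 hw2
    obtain ⟨_, _, _, hna⟩ := hmem1 w hw1
    obtain ⟨_, _, _, hya⟩ := hmem2 w hw2
    exact hna hya
  have hinj1 : Set.InjOn (fun c => insert c A) ↑((u.1 ∪ v.1)ᶜ) := by
    intro c hc c' hc' he
    simp only [Finset.coe_compl, Set.mem_compl_iff, Finset.mem_coe] at hc hc'
    have he' : insert c A = insert c' A := he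
    have hcm : c ∈ insert c' A := by rw [← he']; exact Finset.mem_insert_self c A
    rcases Finset.mem_insert.mp hcm with h' | h'
    · exact h'
    · exact absurd (Finset.mem_union_left _ (hAsubU h')) hc
  have hinj2 : Set.InjOn (fun x => (u.1 ∪ v.1).erase x) ↑A := by
    intro x hx y hy he
    by_contra hxy
    have hxm : x ∈ (u.1 ∪ v.1).erase y :=
      Finset.mem_erase.mpr ⟨hxy, Finset.mem_union_left _ (hAsubU hx)⟩
    have he' : (u.1 ∪ v.1).erase x = (u.1 ∪ v.1).erase y := he
    rw [← he'] at hxm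
    exact (Finset.mem_erase.mp hxm).1 rfl
  have hc1 : S1.card = n - (k + 1) := by
    rw [hS1, Finset.card_image_of_injOn hinj1, Finset.card_compl, hun, Fintype.card_fin]
  have hc2 : S2.card = k - 1 := by
    rw [hS2, Finset.card_image_of_injOn hinj2, hA, hint]
  have hsub : S1 ∪ S2 ⊆ (common (johnsonGraph n k) u v).image Subtype.val := by
    intro w hw
    rcases Finset.mem_union.mp hw with h' | h'
    · obtain ⟨hwc, h1, h2, _⟩ := hmem1 w h'
      exact Finset.mem_image.mpr ⟨⟨w, hwc⟩, (mem_common _).mpr ⟨h1, h2⟩, rfl⟩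
    · obtain ⟨hwc, h1, h2, _⟩ := hmem2 w h'
      exact Finset.mem_image.mpr ⟨⟨w, hwc⟩, (mem_common _).mpr ⟨h1, h2⟩, rfl⟩
  have hcard := Finset.card_le_card hsub
  rw [Finset.card_union_of_disjoint hdisj, hc1, hc2,
    Finset.card_image_of_injective _ Subtype.val_injective] at hcard
  have hkn : k + 1 ≤ n := by
    have h1 := Finset.card_le_univ (u.1 ∪ v.1)
    simp only [Finset.card_univ, Fintype.card_fin] at h1
    omega
  omega

/-- Core 2: distinct non-adjacent vertices have at most 4 common neighbours. -/
lemma common_of_nonadj {u v : JV n k} (hne : u ≠ v) (h : ¬ (johnsonGraph n k).Adj u v) :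
    (common (johnsonGraph n k) u v).card ≤ 4 := by
  rcases Finset.eq_empty_or_nonempty (common (johnsonGraph n k) u v) with he | ⟨w₀, hw₀⟩
  · rw [he]; simp
  have hne' : u.1 ≠ v.1 := fun hc => hne (Subtype.ext hc)
  have hu := u.2
  have hv := v.2
  have hnint : (u.1 ∩ v.1).card ≠ k - 1 := fun hc => h ⟨hne, hc⟩
  have hk : 1 ≤ k := by
    by_contra hc
    have hk0 : k = 0 := by omega
    exact hne' ((Finset.card_eq_zero.mp (hk0 ▸ hu)).trans
      (Finset.card_eq_zero.mp (hk0 ▸ hv)).symm)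
  have hle : (u.1 ∩ v.1).card ≤ k := by
    calc (u.1 ∩ v.1).card ≤ u.1.card := Finset.card_le_card Finset.inter_subset_left
    _ = k := hu
  have hltk : (u.1 ∩ v.1).card ≠ k := by
    intro hc
    have h1 : u.1 ∩ v.1 = u.1 :=
      Finset.eq_of_subset_of_card_le Finset.inter_subset_left (by omega)
    have h2 : u.1 ⊆ v.1 := Finset.inter_eq_left.mp h1
    exact hne' (Finset.eq_of_subset_of_card_le h2 (by omega))
  have key : ∀ w : JV n k, w ∈ common (johnsonGraph n k) u v →
      (u.1 ∩ v.1) ⊆ w.1 ∧ w.1 ⊆ u.1 ∪ v.1 ∧ (u.1 ∩ v.1).card = k - 2 ∧ 2 ≤ k := by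
    intro w hw
    rw [mem_common] at hw
    obtain ⟨⟨_, hwu⟩, ⟨_, hwv⟩⟩ := hw
    have h1 := Finset.card_union_add_card_inter (u.1 ∩ w.1) (v.1 ∩ w.1)
    have h2 : (u.1 ∩ w.1) ∪ (v.1 ∩ w.1) = (u.1 ∪ v.1) ∩ w.1 :=
      (Finset.union_inter_distrib_right _ _ _).symm
    have h3 : (u.1 ∩ w.1) ∩ (v.1 ∩ w.1) = (u.1 ∩ v.1) ∩ w.1 := by
      ext z
      simp only [Finset.mem_inter]
      tauto
    rw [h2, h3, hwu, hwv] at h1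
    have h4 : ((u.1 ∪ v.1) ∩ w.1).card ≤ k := by
      calc ((u.1 ∪ v.1) ∩ w.1).card ≤ w.1.card :=
        Finset.card_le_card Finset.inter_subset_right
      _ = k := w.2
    have h5 : ((u.1 ∩ v.1) ∩ w.1).card ≤ (u.1 ∩ v.1).card :=
      Finset.card_le_card Finset.inter_subset_left
    have hI : (u.1 ∩ v.1).card = k - 2 := by omega
    have hk2 : 2 ≤ k := by omega
    have h7 : (u.1 ∩ v.1) ∩ w.1 = u.1 ∩ v.1 :=
      Finset.eq_of_subset_of_card_le Finset.inter_subset_left (by omega)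
    have h9 : (u.1 ∪ v.1) ∩ w.1 = w.1 :=
      Finset.eq_of_subset_of_card_le Finset.inter_subset_right (by
        have : w.1.card = k := w.2
        omega)
    exact ⟨Finset.inter_eq_left.mp h7, Finset.inter_eq_right.mp h9, hI, hk2⟩
  obtain ⟨-, -, hI, hk2⟩ := key w₀ hw₀
  have hd1 : (u.1 \ v.1).card = 2 := by
    have := Finset.card_inter_add_card_sdiff u.1 v.1
    omega
  have hd2 : (v.1 \ u.1).card = 2 := by
    have h1 := Finset.card_inter_add_card_sdiff v.1 u.1
    rw [Finset.inter_comm] at h1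
    omega
  set T := ((u.1 \ v.1).image (fun x => ({x} : Finset (Fin n)))) ×ˢ
           ((v.1 \ u.1).image (fun x => ({x} : Finset (Fin n)))) with hT
  have hsd : ∀ w : JV n k, w ∈ common (johnsonGraph n k) u v →
      (∃ x ∈ u.1 \ v.1, w.1 \ v.1 = {x}) ∧ (∃ y ∈ v.1 \ u.1, w.1 \ u.1 = {y}) := by
    intro w hw
    obtain ⟨hsubw, hwsub, -, -⟩ := key w hw
    rw [mem_common] at hw
    obtain ⟨⟨_, hwu⟩, ⟨_, hwv⟩⟩ := hw
    constructor
    · have hcv : (w.1 \ v.1).card = 1 := by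
        have h1 := Finset.card_inter_add_card_sdiff w.1 v.1
        rw [Finset.inter_comm] at h1
        rw [w.2] at h1
        omega
      obtain ⟨x, hx⟩ := Finset.card_eq_one.mp hcv
      have hxm : x ∈ w.1 \ v.1 := hx ▸ Finset.mem_singleton_self x
      rw [Finset.mem_sdiff] at hxm
      have hxu : x ∈ u.1 := by
        have := hwsub hxm.1
        rw [Finset.mem_union] at this
        tauto
      exact ⟨x, Finset.mem_sdiff.mpr ⟨hxu, hxm.2⟩, hx⟩
    · have hcu : (w.1 \ u.1).card = 1 := by
        have h1 := Finset.card_inter_add_card_sdiff w.1 u.1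
        rw [Finset.inter_comm] at h1
        rw [w.2] at h1
        omega
      obtain ⟨y, hy⟩ := Finset.card_eq_one.mp hcu
      have hym : y ∈ w.1 \ u.1 := hy ▸ Finset.mem_singleton_self y
      rw [Finset.mem_sdiff] at hym
      have hyv : y ∈ v.1 := by
        have := hwsub hym.1
        rw [Finset.mem_union] at this
        tauto
      exact ⟨y, Finset.mem_sdiff.mpr ⟨hyv, hym.2⟩, hy⟩
  have hmaps : ∀ w ∈ common (johnsonGraph n k) u v,
      (fun w : JV n k => (w.1 \ v.1, w.1 \ u.1)) w ∈ T := by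
    intro w hw
    obtain ⟨⟨x, hx1, hx2⟩, ⟨y, hy1, hy2⟩⟩ := hsd w hw
    rw [hT, Finset.mem_product]
    constructor
    · exact Finset.mem_image.mpr ⟨x, hx1, hx2.symm⟩
    · exact Finset.mem_image.mpr ⟨y, hy1, hy2.symm⟩
  have hdec : ∀ (w : JV n k), (u.1 ∩ v.1) ⊆ w.1 → w.1 ⊆ u.1 ∪ v.1 →
      w.1 = ((u.1 ∩ v.1) ∪ (w.1 \ v.1)) ∪ (w.1 \ u.1) := by
    intro w hsw hws
    ext z
    constructor
    · intro hz
      have hzuv := hws hz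
      rw [Finset.mem_union] at hzuv
      simp only [Finset.mem_union, Finset.mem_inter, Finset.mem_sdiff]
      by_cases h1 : z ∈ v.1
      · by_cases h2 : z ∈ u.1
        · exact Or.inl (Or.inl ⟨h2, h1⟩)
        · exact Or.inr ⟨hz, h2⟩
      · exact Or.inl (Or.inr ⟨hz, h1⟩)
    · intro hz
      simp only [Finset.mem_union, Finset.mem_inter, Finset.mem_sdiff] at hz
      rcases hz with (hz | hz) | hz
      · exact hsw (Finset.mem_inter.mpr hz)
      · exact hz.1
      · exact hz.1
  have hinj : Set.InjOn (fun w : JV n k => (w.1 \ v.1, w.1 \ u.1))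
      ↑(common (johnsonGraph n k) u v) := by
    intro w1 hw1 w2 hw2 he
    have he1 : w1.1 \ v.1 = w2.1 \ v.1 := congrArg Prod.fst he
    have he2 : w1.1 \ u.1 = w2.1 \ u.1 := congrArg Prod.snd he
    obtain ⟨hs1, hsub1, -, -⟩ := key w1 (Finset.mem_coe.mp hw1)
    obtain ⟨hs2, hsub2, -, -⟩ := key w2 (Finset.mem_coe.mp hw2)
    apply Subtype.ext
    rw [hdec w1 hs1 hsub1, hdec w2 hs2 hsub2, he1, he2]
  have hcard := Finset.card_le_card_of_injOn _ hmaps hinj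
  have hTcard : T.card ≤ 4 := by
    rw [hT, Finset.card_product]
    calc ((u.1 \ v.1).image (fun x => ({x} : Finset (Fin n)))).card *
        ((v.1 \ u.1).image (fun x => ({x} : Finset (Fin n)))).card
        ≤ (u.1 \ v.1).card * (v.1 \ u.1).card :=
          Nat.mul_le_mul Finset.card_image_le Finset.card_image_le
    _ = 4 := by rw [hd1, hd2]
  omega

/-- Core 3: each vertex has at least 5 neighbours. -/
lemma degree_ge (hn : 7 ≤ n) (hk1 : 1 ≤ k) (hk2 : k ≤ n - 1) (u : JV n k) :
    5 ≤ (univ.filter (fun w => (johnsonGraph n k).Adj u w)).card := by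
  have hu := u.2
  set S : Finset (Finset (Fin n)) :=
    (u.1 ×ˢ (u.1)ᶜ).image (fun p => insert p.2 (u.1.erase p.1)) with hS
  have hmem : ∀ w ∈ S, ∃ hw : w.card = k, (johnsonGraph n k).Adj u ⟨w, hw⟩ := by
    intro w hw
    rw [hS, Finset.mem_image] at hw
    obtain ⟨⟨a, c⟩, hp, rfl⟩ := hw
    rw [Finset.mem_product, Finset.mem_compl] at hp
    obtain ⟨haU, hcU⟩ := hp
    have hce : c ∉ u.1.erase a := fun hc => hcU (Finset.erase_subset _ _ hc)
    have hwc : (insert c (u.1.erase a)).card = k := by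
      rw [Finset.card_insert_of_notMem hce, Finset.card_erase_of_mem haU, hu]
      omega
    refine ⟨hwc, ?_, ?_⟩
    · intro hc'
      have : c ∈ u.1 := by
        rw [congrArg Subtype.val hc']
        exact Finset.mem_insert_self c _
      exact hcU this
    · have h1 : u.1 ∩ insert c (u.1.erase a) = u.1.erase a := by
        rw [Finset.inter_insert_of_notMem hcU,
          Finset.inter_eq_right.mpr (Finset.erase_subset _ _)]
      rw [h1, Finset.card_erase_of_mem haU, hu]
  have hinj : Set.InjOn (fun p : Fin n × Fin n => insert p.2 (u.1.erase p.1))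
      ↑(u.1 ×ˢ (u.1)ᶜ) := by
    rintro ⟨a, c⟩ hp ⟨a', c'⟩ hp' he
    simp only [Finset.coe_product, Set.mem_prod, Finset.mem_coe, Finset.mem_compl] at hp hp'
    obtain ⟨haU, hcU⟩ := hp
    obtain ⟨haU', hcU'⟩ := hp'
    have he' : insert c (u.1.erase a) = insert c' (u.1.erase a') := he
    have hcc : c = c' := by
      have h1 : c' ∈ insert c (u.1.erase a) := by
        rw [he']
        exact Finset.mem_insert_self c' _
      rcases Finset.mem_insert.mp h1 with h' | h'
      · exact h'.symm
      · exact absurd (Finset.erase_subset _ _ h') hcU'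
    have haa : a = a' := by
      by_contra hne
      have h1 : a ∈ u.1.erase a' := Finset.mem_erase.mpr ⟨hne, haU⟩
      have h2 : a ∈ insert c' (u.1.erase a') := Finset.mem_insert_of_mem h1
      rw [← he'] at h2
      rcases Finset.mem_insert.mp h2 with h' | h'
      · exact hcU (h' ▸ haU)
      · exact (Finset.mem_erase.mp h').1 rfl
    rw [hcc, haa]
  have hScard : S.card = k * (n - k) := by
    rw [hS, Finset.card_image_of_injOn hinj, Finset.card_product, hu,
      Finset.card_compl, hu, Fintype.card_fin]
  have hsub : S ⊆ ((univ.filter (fun w => (johnsonGraph n k).Adj u w)).image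
      Subtype.val) := by
    intro w hw
    obtain ⟨hwc, hadj⟩ := hmem w hw
    exact Finset.mem_image.mpr ⟨⟨w, hwc⟩, Finset.mem_filter.mpr ⟨Finset.mem_univ _, hadj⟩, rfl⟩
  have hcard := Finset.card_le_card hsub
  rw [hScard, Finset.card_image_of_injective _ Subtype.val_injective] at hcard
  have h5 : 5 ≤ k * (n - k) := by
    have h1 : 1 ≤ n - k := by omega
    have h2 : k + (n - k) = n := by omega
    nlinarith
  omega

/-- Core 4: connectivity. -/
lemma reach (u v : JV n k) : Relation.ReflTransGen (johnsonGraph n k).Adj u v := by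
  suffices h : ∀ m (u : JV n k), (u.1 \ v.1).card ≤ m →
      Relation.ReflTransGen (johnsonGraph n k).Adj u v from h _ u le_rfl
  intro m
  induction m with
  | zero =>
    intro u hu0
    have h0 : u.1 \ v.1 = ∅ := Finset.card_eq_zero.mp (Nat.le_antisymm hu0 (Nat.zero_le _))
    have hsub : u.1 ⊆ v.1 := Finset.sdiff_eq_empty_iff_subset.mp h0
    have heq : u = v := Subtype.ext (Finset.eq_of_subset_of_card_le hsub (by rw [u.2, v.2]))
    rw [heq]
  | succ m ih =>
    intro u hu
    by_cases huv : u = v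
    · rw [huv]
    have hne' : u.1 ≠ v.1 := fun hc => huv (Subtype.ext hc)
    have hdne : (u.1 \ v.1).Nonempty := by
      rw [Finset.sdiff_nonempty]
      intro hsub
      exact hne' (Finset.eq_of_subset_of_card_le hsub (by rw [u.2, v.2]))
    have hdne2 : (v.1 \ u.1).Nonempty := by
      rw [Finset.sdiff_nonempty]
      intro hsub
      exact hne' ((Finset.eq_of_subset_of_card_le hsub (by rw [u.2, v.2])).symm)
    obtain ⟨a, ha⟩ := hdne
    obtain ⟨b, hb⟩ := hdne2
    rw [Finset.mem_sdiff] at ha hb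
    have hbe : b ∉ u.1.erase a := fun hc => hb.2 (Finset.erase_subset _ _ hc)
    have hk1 : 1 ≤ k := by
      have := Finset.card_pos.mpr ⟨a, ha.1⟩
      rw [u.2] at this
      exact this
    have hwc : (insert b (u.1.erase a)).card = k := by
      rw [Finset.card_insert_of_notMem hbe, Finset.card_erase_of_mem ha.1, u.2]
      omega
    have hadj : (johnsonGraph n k).Adj u ⟨insert b (u.1.erase a), hwc⟩ := by
      constructor
      · intro hc
        have : b ∈ u.1 := by
          rw [congrArg Subtype.val hc]
          exact Finset.mem_insert_self b _
        exact hb.2 this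
      · have h1 : u.1 ∩ insert b (u.1.erase a) = u.1.erase a := by
          rw [Finset.inter_insert_of_notMem hb.2,
            Finset.inter_eq_right.mpr (Finset.erase_subset _ _)]
        rw [h1, Finset.card_erase_of_mem ha.1, u.2]
    refine Relation.ReflTransGen.head hadj (ih ⟨insert b (u.1.erase a), hwc⟩ ?_)
    have hsd : insert b (u.1.erase a) \ v.1 = (u.1 \ v.1).erase a := by
      ext z
      simp only [Finset.mem_sdiff, Finset.mem_insert, Finset.mem_erase]
      constructor
      · rintro ⟨rfl | hz, hzv⟩
        · exact absurd hb.1 hzv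
        · exact ⟨hz.1, hz.2, hzv⟩
      · rintro ⟨hza, hzu, hzv⟩
        exact ⟨Or.inr ⟨hza, hzu⟩, hzv⟩
    rw [hsd, Finset.card_erase_of_mem (Finset.mem_sdiff.mpr ha)]
    have hpos := Finset.card_pos.mpr ⟨a, Finset.mem_sdiff.mpr ha⟩
    omega

/-- Two distinct vertices with ≥ 5 common neighbours are adjacent (n ≥ 7). -/
lemma adj_of_common {u v : JV n k} (hne : u ≠ v)
    (h : 5 ≤ (common (johnsonGraph n k) u v).card) : (johnsonGraph n k).Adj u v := by
  by_contra hadj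
  have := common_of_nonadj hne hadj
  omega

/-- Twin-freeness. -/
lemma twinfree (hn : 7 ≤ n) (hk1 : 1 ≤ k) (hk2 : k ≤ n - 1) {u v : JV n k}
    (h : ∀ w, (johnsonGraph n k).Adj u w ↔ (johnsonGraph n k).Adj v w) : u = v := by
  by_contra hne
  by_cases hadj : (johnsonGraph n k).Adj u v
  · exact (johnsonGraph n k).loopless.irrefl v ((h v).mp hadj)
  · have h4 := common_of_nonadj hne hadj
    have h5 := degree_ge hn hk1 hk2 u
    have hsub : (univ.filter (fun w => (johnsonGraph n k).Adj u w)) ⊆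
        common (johnsonGraph n k) u v := by
      intro w hw
      simp only [mem_filter, mem_univ, true_and] at hw
      exact (mem_common _).mpr ⟨hw, (h w).mp hw⟩
    have := Finset.card_le_card hsub
    omega

section DC
variable {W : Type*} [Fintype W] [DecidableEq W] (X : SimpleGraph W) [DecidableRel X.Adj]

lemma common_map (α : X ≃g X) (u v : W) :
    (common X (α u) (α v)).card = (common X u v).card := by
  have himg : common X (α u) (α v) = (common X u v).image α := by
    ext w
    simp only [mem_common, Finset.mem_image]
    constructor
    · rintro ⟨h1, h2⟩
      refine ⟨α.symm w, ⟨?_, ?_⟩, by simp⟩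
      · rw [← α.map_rel_iff (a := u)]; simpa using h1
      · rw [← α.map_rel_iff (a := v)]; simpa using h2
    · rintro ⟨x, hx, rfl⟩
      exact ⟨α.map_rel_iff.mpr hx.1, α.map_rel_iff.mpr hx.2⟩
  rw [himg, Finset.card_image_of_injective _ (EquivLike.injective α)]

lemma common_dc_same (u v : W) (i : Bool) :
    (common (doubleCover X) (u, i) (v, i)).card = (common X u v).card := by
  apply Finset.card_nbij' (fun p => p.1) (fun w => (w, !i))
  · intro p hp
    rw [Finset.mem_coe, mem_common] at hp
    obtain ⟨⟨h1, _⟩, ⟨h3, _⟩⟩ := hp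
    exact (mem_common _).mpr ⟨h1, h3⟩
  · intro w hw
    rw [Finset.mem_coe, mem_common] at hw
    refine (mem_common _).mpr ⟨⟨hw.1, by simp⟩, ⟨hw.2, by simp⟩⟩
  · intro p hp
    rw [Finset.mem_coe, mem_common] at hp
    obtain ⟨⟨_, h2⟩, _⟩ := hp
    have : p.2 = !i := by revert h2; cases p.2 <;> cases i <;> simp
    simp [← this]
  · intro w _; rfl

lemma common_dc_diff {p q : W × Bool} (hpq : p.2 ≠ q.2) :
    common (doubleCover X) p q = ∅ := by
  ext w
  simp only [mem_common, Finset.notMem_empty, iff_false]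
  rintro ⟨⟨_, h2⟩, ⟨_, h4⟩⟩
  revert h2 h4 hpq
  cases p.2 <;> cases q.2 <;> cases w.2 <;> simp

end DC

end JS

theorem johnson_stable (n k : ℕ) (hn6 : 6 ≤ n) (hne6 : n ≠ 6)
    (hk1 : 1 ≤ k) (hk2 : k ≤ n - 1)
    (h21 : ¬(n = 2 ∧ k = 1)) (h42 : ¬(n = 4 ∧ k = 2)) :
    IsStable (johnsonGraph n k) := by
  classical
  have hn : 7 ≤ n := by omega
  set J := johnsonGraph n k with hJ
  intro α
  -- adjacent vertices keep the same colour class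
  have key : ∀ (u v : JS.JV n k) (i : Bool),
      J.Adj u v → (α (u, i)).2 = (α (v, i)).2 := by
    intro u v i huv
    have h5 : 5 ≤ (JS.common (doubleCover J) (u, i) (v, i)).card := by
      rw [JS.common_dc_same]
      exact JS.common_of_adj hn huv
    have h5' : 5 ≤ (JS.common (doubleCover J) (α (u, i)) (α (v, i))).card := by
      rwa [JS.common_map _ α]
    by_contra hne
    rw [JS.common_dc_diff _ hne] at h5'
    simp at h5'
  -- same colour class along walks, hence globally
  have key2 : ∀ (u v : JS.JV n k) (i : Bool), (α (u, i)).2 = (α (v, i)).2 := by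
    intro u v i
    induction JS.reach u v with
    | refl => rfl
    | tail _ hadj ih => exact ih.trans (key _ _ i hadj)
  -- a base vertex
  obtain ⟨s, -, hs⟩ : ∃ s ⊆ (Finset.univ : Finset (Fin n)), s.card = k := by
    apply Finset.exists_subset_card_eq
    simp only [Finset.card_univ, Fintype.card_fin]
    omega
  set v₀ : JS.JV n k := ⟨s, hs⟩ with hv₀
  set b : Bool := (α (v₀, false)).2 with hb
  have hbtrue : (α (v₀, true)).2 = !b := by
    by_contra hc
    have hbt : (α (v₀, true)).2 = b := by
      rcases Bool.eq_false_or_eq_true ((α (v₀, true)).2) with h | h <;>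
        rcases Bool.eq_false_or_eq_true b with h2 | h2 <;> simp_all
    have hall : ∀ p : JS.JV n k × Bool, (α p).2 = b := by
      rintro ⟨x, i⟩
      cases i
      · exact (key2 x v₀ false).trans rfl
      · exact (key2 x v₀ true).trans hbt
    have h1 := hall (α.symm (v₀, !b))
    rw [RelIso.apply_symm_apply] at h1
    simp at h1
  set f : JS.JV n k → JS.JV n k := fun v => (α (v, false)).1 with hf
  set g : JS.JV n k → JS.JV n k := fun v => (α (v, true)).1 with hg
  have hαf : ∀ v, α (v, false) = (f v, b) := fun v => Prod.ext rfl (key2 v v₀ false)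
  have hαg : ∀ v, α (v, true) = (g v, !b) := fun v =>
    Prod.ext rfl ((key2 v v₀ true).trans hbtrue)
  -- mixed adjacency transfer
  have hmix : ∀ u v, J.Adj u v ↔ J.Adj (f u) (g v) := by
    intro u v
    have h2 : (doubleCover J).Adj (α (u, false)) (α (v, true)) ↔
        (doubleCover J).Adj (u, false) (v, true) := α.map_rel_iff
    rw [hαf, hαg] at h2
    have h3 : (doubleCover J).Adj (f u, b) (g v, !b) ↔ J.Adj (f u) (g v) := by
      simp [doubleCover]
    have h1 : (doubleCover J).Adj (u, false) (v, true) ↔ J.Adj u v := by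
      simp [doubleCover]
    rw [h3, h1] at h2
    exact h2.symm
  have hfinj : Function.Injective f := by
    intro u v huv
    have h1 : α (u, false) = α (v, false) := by rw [hαf, hαf, huv]
    exact congrArg Prod.fst (α.injective h1)
  -- f preserves adjacency
  have hfadj : ∀ u v, J.Adj u v ↔ J.Adj (f u) (f v) := by
    intro u v
    constructor
    · intro huv
      have h5 : 5 ≤ (JS.common (doubleCover J) (u, false) (v, false)).card := by
        rw [JS.common_dc_same]; exact JS.common_of_adj hn huv
      have h5' : 5 ≤ (JS.common (doubleCover J) (α (u, false)) (α (v, false))).card := by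
        rwa [JS.common_map _ α]
      rw [hαf, hαf, JS.common_dc_same] at h5'
      refine JS.adj_of_common ?_ h5'
      intro hc
      exact huv.1 (hfinj hc)
    · intro huv
      have h5 : 5 ≤ (JS.common (doubleCover J) (f u, b) (f v, b)).card := by
        rw [JS.common_dc_same]; exact JS.common_of_adj hn huv
      have h5' : 5 ≤ (JS.common (doubleCover J)
          (α.symm (f u, b)) (α.symm (f v, b))).card := by
        rwa [JS.common_map _ α.symm]
      rw [← hαf u, ← hαf v, RelIso.symm_apply_apply, RelIso.symm_apply_apply] at h5'
      rw [JS.common_dc_same] at h5'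
      refine JS.adj_of_common ?_ h5'
      rintro rfl
      exact huv.1 rfl
  -- f surjective
  have hfsurj : Function.Surjective f := by
    intro w
    have hαp : α (α.symm (w, b)) = (w, b) := α.apply_symm_apply _
    rcases hsy : α.symm (w, b) with ⟨x, i⟩
    rw [hsy] at hαp
    cases i with
    | true =>
      rw [hαg] at hαp
      have h2 := congrArg Prod.snd hαp
      simp at h2
    | false =>
      rw [hαf] at hαp
      exact ⟨x, congrArg Prod.fst hαp⟩
  -- g = f via twin-freeness
  have hgf : ∀ v, g v = f v := by
    intro v
    apply JS.twinfree hn hk1 hk2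
    intro w
    obtain ⟨x, rfl⟩ := hfsurj w
    rw [J.adj_comm (g v) (f x), J.adj_comm (f v) (f x)]
    rw [← hmix x v, ← hfadj x v]
  -- assemble
  refine ⟨⟨Equiv.ofBijective f ⟨hfinj, hfsurj⟩, fun {a b} => (hfadj a b).symm⟩, b, ?_⟩
  rintro ⟨x, i⟩
  cases i
  · rw [show ((⟨Equiv.ofBijective f ⟨hfinj, hfsurj⟩, fun {a b} => (hfadj a b).symm⟩ :
      J ≃g J) x : JS.JV n k) = f x from rfl]
    simpa using hαf x
  · rw [show ((⟨Equiv.ofBijective f ⟨hfinj, hfsurj⟩, fun {a b} => (hfadj a b).symm⟩ :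
      J ≃g J) x : JS.JV n k) = f x from rfl]
    simpa [hgf x] using hαg x
end

section
/- Let X be a connected, non-bipartite, twin-free, triangle-free graph of diameter 2. Then X is stable. -/
open SimpleGraph

/-- Adjacency in the double cover, unfolded. -/
lemma doubleCover_adj {V : Type*} (X : SimpleGraph V) (p q : V × Bool) :
    (doubleCover X).Adj p q ↔ X.Adj p.1 q.1 ∧ p.2 ≠ q.2 := Iff.rfl

/-- A non-2-colorable graph has a closed walk of odd length. -/
lemma exists_odd_closed_walk {V : Type*} (X : SimpleGraph V)
    (hconn : X.Connected) (hnbip : ¬X.Colorable 2) :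
    ∃ (u : V) (w : X.Walk u u), Odd w.length := by
  by_contra h
  push_neg at h
  simp only [Nat.not_odd_iff_even] at h
  obtain ⟨v₀⟩ := hconn.nonempty
  have key : ∀ {v : V} (w w' : X.Walk v₀ v), w.length % 2 = w'.length % 2 := by
    intro v w w'
    have h2 := h v₀ (w.append w'.reverse)
    rw [SimpleGraph.Walk.length_append, SimpleGraph.Walk.length_reverse,
      Nat.even_iff] at h2
    omega
  have wk : ∀ v : V, X.Walk v₀ v := fun v => (hconn v₀ v).some
  have hcol : X.Coloring (ZMod 2) := by
    refine SimpleGraph.Coloring.mk (fun v => ((wk v).length : ZMod 2)) ?_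
    intro u v hadj heq
    have h2 := key ((wk u).concat hadj) (wk v)
    rw [SimpleGraph.Walk.length_concat] at h2
    rw [ZMod.natCast_eq_natCast_iff'] at heq
    omega
  exact hnbip (by simpa using hcol.colorable)

/-- Parity of a natural number, as a Bool. -/
def parb (n : ℕ) : Bool := decide (n % 2 = 1)

lemma parb_succ (n : ℕ) : parb (n + 1) = !(parb n) := by
  simp only [parb]
  rcases Nat.mod_two_eq_zero_or_one n with h | h <;> simp [Nat.add_mod, h]

lemma parb_add (m n : ℕ) : parb (m + n) = xor (parb m) (parb n) := by
  simp only [parb]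
  rcases Nat.mod_two_eq_zero_or_one m with h | h <;>
    rcases Nat.mod_two_eq_zero_or_one n with h' | h' <;>
      simp [Nat.add_mod, h, h']

lemma parb_odd {n : ℕ} (h : Odd n) : parb n = true := by
  simp only [parb, decide_eq_true_eq]
  exact Nat.odd_iff.mp h

/-- A walk in `X` lifts to a walk in the double cover, flipping the second
coordinate according to the parity of its length. -/
lemma doubleCover_reach_parb {V : Type*} (X : SimpleGraph V) :
    ∀ {x y : V} (w : X.Walk x y) (i : Bool),
      (doubleCover X).Reachable (x, i) (y, xor i (parb w.length)) := by
  intro x y w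
  induction w with
  | nil => intro i; simpa [parb] using Reachable.refl _
  | @cons a c d h p ih =>
    intro i
    have hadj : (doubleCover X).Adj (a, i) (c, !i) := ⟨h, by cases i <;> simp⟩
    have hr := (hadj.reachable).trans (ih (!i))
    have : xor (!i) (parb p.length) = xor i (parb (p.length + 1)) := by
      rw [parb_succ]; cases i <;> cases parb p.length <;> rfl
    rw [this] at hr
    simpa using hr

theorem triangle_free_diam_two_stable {V : Type*} [Fintype V] (X : SimpleGraph V)
    (hconn : X.Connected) (hnbip : ¬X.Colorable 2) (htf : TwinFree X)
    (htfree : X.CliqueFree 3) (hdiam : X.diam = 2) :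
    IsStable X := by
  intro α
  classical
  obtain ⟨u₀, o, ho⟩ := exists_odd_closed_walk X hconn hnbip
  -- the double cover is connected
  have hbx : ∀ p q : V × Bool, (doubleCover X).Reachable p q := by
    intro p q
    have a : X.Walk p.1 u₀ := (hconn p.1 u₀).some
    have c : X.Walk u₀ q.1 := (hconn u₀ q.1).some
    by_cases hcase : xor p.2 (parb (a.append c).length) = q.2
    · have := doubleCover_reach_parb X (a.append c) p.2
      rw [hcase] at this
      simpa using this
    · have hr := doubleCover_reach_parb X (a.append (o.append c)) p.2
      have hpar : parb (a.append (o.append c)).length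
          = !(parb (a.append c).length) := by
        simp only [SimpleGraph.Walk.length_append, parb_add, parb_odd ho]
        cases parb a.length <;> cases parb c.length <;> rfl
      have hq : xor p.2 (parb (a.append (o.append c)).length) = q.2 := by
        rw [hpar]
        revert hcase
        cases p.2 <;> cases parb (a.append c).length <;> cases q.2 <;> simp
      rw [hq] at hr
      simpa using hr
  -- the parity shift of α is constant
  have hpar : ∀ p q, (doubleCover X).Adj p q →
      xor (α p).2 p.2 = xor (α q).2 q.2 := by
    intro p q h
    have h1 : (α p).2 ≠ (α q).2 := by
      have := (α.map_adj_iff (v := p) (w := q)).mpr h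
      exact this.2
    have h2 : p.2 ≠ q.2 := h.2
    revert h1 h2
    cases (α p).2 <;> cases (α q).2 <;> cases p.2 <;> cases q.2 <;> simp
  have hconst : ∀ p q, xor (α p).2 p.2 = xor (α q).2 q.2 := by
    intro p q
    obtain ⟨w⟩ := hbx p q
    induction w with
    | nil => rfl
    | cons h w ih => exact (hpar _ _ h).trans ih
  obtain ⟨v₀⟩ := hconn.nonempty
  set b : Bool := (α (v₀, false)).2 with hbdef
  have hb : ∀ p, (α p).2 = xor p.2 b := by
    intro p
    have := hconst p (v₀, false)
    revert this
    rw [← hbdef]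
    cases (α p).2 <;> cases p.2 <;> cases b <;> simp
  set σ : V → V := fun x => (α (x, false)).1 with hσdef
  set δ : V → V := fun x => (α (x, true)).1 with hδdef
  have hσ : ∀ x, α (x, false) = (σ x, b) := by
    intro x
    refine Prod.ext rfl ?_
    rw [hb]; simp
  have hδ : ∀ x, α (x, true) = (δ x, !b) := by
    intro x
    refine Prod.ext rfl ?_
    rw [hb]; cases b <;> rfl
  -- the fundamental transfer property
  have T : ∀ x y : V, X.Adj x y ↔ X.Adj (σ x) (δ y) := by
    intro x y
    have hiff := α.map_adj_iff (v := (x, false)) (w := (y, true))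
    rw [hσ x, hδ y, doubleCover_adj, doubleCover_adj] at hiff
    constructor
    · intro h
      exact (hiff.mpr ⟨h, by simp⟩).1
    · intro h
      exact (hiff.mp ⟨h, by cases b <;> simp⟩).1
  -- the inverse parity shift
  have hb' : ∀ p, (α.symm p).2 = xor p.2 b := by
    intro p
    have := hb (α.symm p)
    rw [α.apply_symm_apply] at this
    revert this
    cases (α.symm p).2 <;> cases p.2 <;> cases b <;> simp
  -- σ and δ are surjective
  have hσsurj : Function.Surjective σ := by
    intro y
    refine ⟨(α.symm (y, b)).1, ?_⟩
    have hs : α.symm (y, b) = ((α.symm (y, b)).1, false) := by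
      refine Prod.ext rfl ?_
      rw [hb']; cases b <;> rfl
    have h2 : α ((α.symm (y, b)).1, false) = (y, b) := by
      rw [← hs, α.apply_symm_apply]
    exact congrArg Prod.fst h2
  have hδsurj : Function.Surjective δ := by
    intro y
    refine ⟨(α.symm (y, !b)).1, ?_⟩
    have hs : α.symm (y, !b) = ((α.symm (y, !b)).1, true) := by
      refine Prod.ext rfl ?_
      rw [hb']; cases b <;> rfl
    have h2 : α ((α.symm (y, !b)).1, true) = (y, !b) := by
      rw [← hs, α.apply_symm_apply]
    exact congrArg Prod.fst h2
  have hσinj : Function.Injective σ := by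
    intro x x' h
    have h2 : α (x, false) = α (x', false) := by
      rw [hσ x, hσ x', h]
    have := α.injective h2
    exact congrArg Prod.fst this
  -- common neighbours from diameter 2
  have hmid : ∀ z y : V, z ≠ y → ¬X.Adj z y → ∃ w, X.Adj z w ∧ X.Adj w y := by
    intro z y hne hna
    have hr : X.Reachable z y := hconn z y
    have hEd : X.ediam ≠ ⊤ := by
      intro h
      rw [SimpleGraph.diam, h] at hdiam
      simp at hdiam
    have h2 : X.dist z y ≤ 2 := hdiam ▸ X.dist_le_diam hEd
    have h0 : X.dist z y ≠ 0 := fun h => hne (hr.dist_eq_zero_iff.mp h)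
    have h1 : X.dist z y ≠ 1 := fun h => hna (SimpleGraph.dist_eq_one_iff_adj.mp h)
    have hd : X.dist z y = 2 := by omega
    obtain ⟨w, hw⟩ := hr.exists_walk_length_eq_dist
    rw [hd] at hw
    cases w with
    | nil => simp at hw
    | @cons _ c _ h p =>
      cases p with
      | nil => simp at hw
      | @cons _ d _ h' p' =>
        have hl : p'.length = 0 := by
          simp only [SimpleGraph.Walk.length_cons] at hw
          omega
        have hdy : d = y := SimpleGraph.Walk.eq_of_length_eq_zero hl
        subst hdy
        exact ⟨c, h, h'⟩
  -- the key step: σ = δ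
  have key : ∀ x, σ x = δ x := by
    intro x
    by_contra hne
    have hnadj : ¬X.Adj (σ x) (δ x) := fun h => X.loopless.irrefl x ((T x x).mpr h)
    have hnoedge : ∀ z w, X.Adj z (σ x) → X.Adj w (δ x) → ¬X.Adj z w := by
      intro z w hz hw hzw
      obtain ⟨z', rfl⟩ := hδsurj z
      obtain ⟨w', rfl⟩ := hσsurj w
      have h1 : X.Adj x z' := (T x z').mpr hz.symm
      have h2 : X.Adj w' x := (T w' x).mpr hw
      have h3 : X.Adj w' z' := (T w' z').mpr hzw.symm
      exact htfree {x, z', w'}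
        (SimpleGraph.is3Clique_triple_iff.mpr ⟨h1, h2.symm, h3.symm⟩)
    have hNe : X.neighborSet (σ x) ≠ X.neighborSet (δ x) :=
      fun h => hne (htf _ _ h)
    obtain ⟨z, hz⟩ : ∃ z, ¬(X.Adj (σ x) z ↔ X.Adj (δ x) z) := by
      by_contra h
      push_neg at h
      exact hNe (Set.ext fun z => h z)
    by_cases ha : X.Adj (σ x) z
    · have hb2 : ¬X.Adj (δ x) z := fun h => hz ⟨fun _ => h, fun _ => ha⟩
      have hzne : z ≠ δ x := by
        rintro rfl
        exact hnadj ha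
      obtain ⟨w, hw1, hw2⟩ := hmid z (δ x) hzne (fun h => hb2 h.symm)
      exact hnoedge z w ha.symm hw2 hw1
    · have hb2 : X.Adj (δ x) z := by
        by_contra hb3
        exact hz ⟨fun h => absurd h ha, fun h => absurd h hb3⟩
      have hzne : z ≠ σ x := by
        rintro rfl
        exact hnadj hb2.symm
      obtain ⟨w, hw1, hw2⟩ := hmid z (σ x) hzne (fun h => ha h.symm)
      exact hnoedge w z hw2 hb2.symm hw1.symm
  -- assemble the expected automorphism
  have hσbij : Function.Bijective σ := ⟨hσinj, hσsurj⟩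
  let e : V ≃ V := Equiv.ofBijective σ hσbij
  have hmapiff : ∀ {x y : V}, X.Adj (e x) (e y) ↔ X.Adj x y := by
    intro x y
    have he : e y = δ y := key y
    rw [show (X.Adj (e x) (e y)) = (X.Adj (σ x) (e y)) from rfl, he]
    exact (T x y).symm
  refine ⟨⟨e, hmapiff⟩, b, ?_⟩
  rintro ⟨x, i⟩
  cases i
  · rw [hσ x]
    refine Prod.ext rfl ?_
    simp
  · rw [hδ x]
    refine Prod.ext ?_ ?_
    · exact (key x).symm
    · cases b <;> rfl
end

section
/- Let X be a strongly regular graph with parameters (n,k,λ,μ). If X is non-trivially unstable, then λ = μ > 0. -/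
open SimpleGraph

lemma aux_eq_of_reachable {W : Type*} (Y : SimpleGraph W) (h : W → Bool)
    (hadj : ∀ p q, Y.Adj p q → h p = h q) {p q : W} (hr : Y.Reachable p q) : h p = h q := by
  obtain ⟨w⟩ := hr
  induction w with
  | nil => rfl
  | cons a w ih => exact (hadj _ _ a).trans ih

lemma aux_lift {V : Type*} (X : SimpleGraph V) {x y : V} (w : X.Walk x y) :
    ∀ i : Bool, (doubleCover X).Reachable (x, i) (y, xor i (decide (Odd w.length))) := by
  induction w with
  | nil => intro i; simpa using Reachable.refl _
  | @cons a c d h w ih =>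
    intro i
    have h1 : (doubleCover X).Adj (a, i) (c, !i) := ⟨h, by cases i <;> simp⟩
    have h2 := ih (!i)
    have h3 : (Walk.cons h w).length = w.length + 1 := rfl
    have h4 : xor i (decide (Odd (Walk.cons h w).length)) = xor (!i) (decide (Odd w.length)) := by
      rw [h3]
      have : decide (Odd (w.length + 1)) = !decide (Odd w.length) := by
        rcases Nat.even_or_odd w.length with he | ho
        · have p1 : Odd (w.length + 1) := Even.add_one he
          have p2 : ¬ Odd w.length := Nat.not_odd_iff_even.mpr he
          simp [p1, p2]
        · have p1 : ¬ Odd (w.length + 1) := by rw [Nat.odd_add_one]; simpa using ho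
          simp [p1, ho]
      rw [this]; cases i <;> cases decide (Odd w.length) <;> rfl
    rw [h4]
    exact h1.reachable.trans h2

lemma aux_odd_walk {V : Type*} (X : SimpleGraph V) (hconn : X.Connected)
    (hnbip : ¬X.Colorable 2) : ∃ (v : V) (w : X.Walk v v), Odd w.length := by
  by_contra hc
  push_neg at hc
  have : Nonempty V := hconn.nonempty
  obtain ⟨v₀⟩ := this
  apply hnbip
  refine ⟨SimpleGraph.Coloring.mk (fun x => (⟨X.dist v₀ x % 2, Nat.mod_lt _ two_pos⟩ : Fin 2)) ?_⟩
  intro x y hxy hco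
  have hco' : X.dist v₀ x % 2 = X.dist v₀ y % 2 := by
    simpa using congrArg Fin.val hco
  obtain ⟨w1, hw1⟩ := (hconn v₀ x).exists_walk_length_eq_dist
  obtain ⟨w2, hw2⟩ := (hconn v₀ y).exists_walk_length_eq_dist
  have hodd : Odd (w1.append ((Walk.cons hxy Walk.nil).append w2.reverse)).length := by
    simp only [Walk.length_append, Walk.length_cons, Walk.length_nil, Walk.length_reverse]
    rw [hw1, hw2, Nat.odd_iff]
    omega
  exact hc v₀ _ hodd

theorem srg_nontrivially_unstable_lambda_eq_mu {V : Type*} [Fintype V] (X : SimpleGraph V)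
    [DecidableRel X.Adj] (n k l m : ℕ)
    (hsrg : X.IsSRGWith n k l m) (hconn : X.Connected) (hdiam : X.diam = 2)
    (hunst : ¬IsStable X) (hnbip : ¬X.Colorable 2) (htf : TwinFree X) :
    l = m ∧ 0 < m := by
  constructor
  · -- l = m
    by_contra hlm
    apply hunst
    intro α
    have hV : Nonempty V := hconn.nonempty
    obtain ⟨v₀⟩ := hV
    obtain ⟨vc, wc, hwc⟩ := aux_odd_walk X hconn hnbip
    -- every vertex of the double cover is reachable from (vc, false)
    have hreach : ∀ r : V × Bool, (doubleCover X).Reachable (vc, false) r := by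
      rintro ⟨y, j⟩
      obtain ⟨w⟩ := hconn vc y
      have hox : decide (Odd wc.length) = true := decide_eq_true hwc
      have r0 : (doubleCover X).Reachable (vc, false) (vc, true) := by
        simpa [hox] using aux_lift X wc false
      by_cases hj : xor false (decide (Odd w.length)) = j
      · exact hj ▸ aux_lift X w false
      · have hj' : xor true (decide (Odd w.length)) = j := by
          revert hj; cases j <;> cases decide (Odd w.length) <;> simp
        exact r0.trans (hj' ▸ aux_lift X w true)
    -- the parity defect of α is constant
    have hadjc : ∀ p q, (doubleCover X).Adj p q → xor (α p).2 p.2 = xor (α q).2 q.2 := by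
      intro p q hpq
      have h1 : (doubleCover X).Adj (α p) (α q) := α.map_adj_iff.mpr hpq
      have h2 := h1.2
      have h3 := hpq.2
      revert h2 h3
      cases (α p).2 <;> cases (α q).2 <;> cases p.2 <;> cases q.2 <;> simp
    have hconst : ∀ p q : V × Bool, xor (α p).2 p.2 = xor (α q).2 q.2 := by
      intro p q
      exact (aux_eq_of_reachable _ _ hadjc (hreach p)).symm.trans
        (aux_eq_of_reachable _ _ hadjc (hreach q))
    obtain ⟨b, hbdef⟩ : ∃ b : Bool, (α (v₀, false)).2 = b := ⟨_, rfl⟩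
    have hb : ∀ p : V × Bool, (α p).2 = xor p.2 b := by
      intro p
      have h := hconst p (v₀, false)
      rw [hbdef] at h
      simp only [Bool.xor_false] at h
      rw [← h]
      cases (α p).2 <;> cases p.2 <;> rfl
    set f : V → V := fun x => (α (x, false)).1 with hfdef
    set g : V → V := fun x => (α (x, true)).1 with hgdef
    have hab : ∀ x y, X.Adj x y ↔ X.Adj (f x) (g y) := by
      intro x y
      constructor
      · intro h
        exact (α.map_adj_iff.mpr ⟨h, by simp⟩).1
      · intro h
        have hne : (α (x, false)).2 ≠ (α (y, true)).2 := by
          rw [hb, hb]; cases b <;> simp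
        exact (α.map_adj_iff.mp ⟨h, hne⟩).1
    have hba : ∀ x y, X.Adj x y ↔ X.Adj (g x) (f y) := by
      intro x y
      rw [X.adj_comm, hab y x, X.adj_comm]
    have hfinj : Function.Injective f := by
      intro x x' h
      have : α (x, false) = α (x', false) :=
        Prod.ext h (by rw [hb, hb])
      have := α.toEquiv.injective this
      exact congrArg Prod.fst this
    have hginj : Function.Injective g := by
      intro x x' h
      have : α (x, true) = α (x', true) :=
        Prod.ext h (by rw [hb, hb])
      have := α.toEquiv.injective this
      exact congrArg Prod.fst this
    have hbsymm : ∀ p : V × Bool, (α.symm p).2 = xor p.2 b := by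
      intro p
      have h := hb (α.symm p)
      rw [α.apply_symm_apply] at h
      rw [h]
      cases (α.symm p).2 <;> cases b <;> rfl
    have hfsurj : Function.Surjective f := by
      intro y
      refine ⟨(α.symm (y, b)).1, ?_⟩
      have h2 : (α.symm (y, b)).2 = false := by
        rw [hbsymm]; cases b <;> rfl
      have h3 : ((α.symm (y, b)).1, false) = α.symm (y, b) := Prod.ext rfl h2.symm
      show (α ((α.symm (y, b)).1, false)).1 = y
      rw [h3, α.apply_symm_apply]
    have hgsurj : Function.Surjective g := by
      intro y
      refine ⟨(α.symm (y, !b)).1, ?_⟩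
      have h2 : (α.symm (y, !b)).2 = true := by
        rw [hbsymm]; cases b <;> rfl
      have h3 : ((α.symm (y, !b)).1, true) = α.symm (y, !b) := Prod.ext rfl h2.symm
      show (α ((α.symm (y, !b)).1, true)).1 = y
      rw [h3, α.apply_symm_apply]
    -- common neighbour counts are preserved by f
    have hcard : ∀ x y : V,
        Fintype.card (X.commonNeighbors (f x) (f y)) = Fintype.card (X.commonNeighbors x y) := by
      intro x y
      have hF : ∀ z : V, z ∈ X.commonNeighbors x y → g z ∈ X.commonNeighbors (f x) (f y) := by
        intro z hz
        rw [mem_commonNeighbors] at hz ⊢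
        exact ⟨(hab x z).mp hz.1, (hab y z).mp hz.2⟩
      refine (Fintype.card_of_bijective (f := fun z : X.commonNeighbors x y =>
        (⟨g z.1, hF z.1 z.2⟩ : X.commonNeighbors (f x) (f y))) ⟨?_, ?_⟩).symm
      · intro z z' h
        exact Subtype.ext (hginj (congrArg Subtype.val h))
      · rintro ⟨u, hu⟩
        obtain ⟨z, rfl⟩ := hgsurj u
        rw [mem_commonNeighbors] at hu
        exact ⟨⟨z, (X.mem_commonNeighbors).mpr ⟨(hab x z).mpr hu.1, (hab y z).mpr hu.2⟩⟩, rfl⟩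
    -- f is an automorphism
    have hfadj : ∀ x y, X.Adj (f x) (f y) ↔ X.Adj x y := by
      intro x y
      constructor
      · intro h
        by_contra hxy
        have hne : x ≠ y := by
          rintro rfl
          exact X.loopless.irrefl _ h
        have c1 := hsrg.of_not_adj hne hxy
        have c2 := hsrg.of_adj _ _ h
        rw [hcard] at c2
        exact hlm (c2.symm.trans c1)
      · intro h
        by_contra hf
        have hne : f x ≠ f y := fun e => h.ne (hfinj e)
        have c1 := hsrg.of_not_adj hne hf
        have c2 := hsrg.of_adj _ _ h
        rw [hcard] at c1
        exact hlm (c2.symm.trans c1)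
    -- g = f
    have hgf : ∀ y, g y = f y := by
      intro y
      apply htf
      ext a
      obtain ⟨x, rfl⟩ := hfsurj a
      rw [mem_neighborSet, mem_neighborSet]
      rw [hfadj y x, ← hba y x]
    -- conclude
    refine ⟨⟨Equiv.ofBijective f ⟨hfinj, hfsurj⟩, ?_⟩, b, ?_⟩
    · intro x y
      exact hfadj x y
    · rintro ⟨x, i⟩
      cases i
      · exact Prod.ext rfl (hb _)
      · exact Prod.ext (hgf x) (hb _)
  · -- 0 < m
    have hV : Nonempty V := hconn.nonempty
    obtain ⟨u, v, huv⟩ := X.exists_dist_eq_diam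
    rw [hdiam] at huv
    have hne : u ≠ v := by
      rintro rfl
      rw [X.dist_self] at huv
      omega
    have hnadj : ¬X.Adj u v := by
      intro h
      have := dist_eq_one_iff_adj.mpr h
      omega
    obtain ⟨w, hw⟩ := (hconn u v).exists_walk_length_eq_dist
    rw [huv] at hw
    have hz : ∃ z, X.Adj u z ∧ X.Adj z v := by
      cases w with
      | nil => simp at hw
      | cons h1 w' =>
        cases w' with
        | nil => simp at hw
        | cons h2 w'' =>
          cases w'' with
          | nil => exact ⟨_, h1, h2⟩
          | cons h3 w''' => simp [Walk.length_cons] at hw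
    obtain ⟨z, hz1, hz2⟩ := hz
    have hm := hsrg.of_not_adj hne hnadj
    rw [← hm]
    exact Fintype.card_pos_iff.mpr ⟨⟨z, (X.mem_commonNeighbors).mpr ⟨hz1, hz2.symm⟩⟩⟩
end
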